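/- Let G be a TSO game of group II, i.e. both players are permitted to update buffer messages exactly before their own moves (and at no other time). Suppose σ_X is a positional winning strategy for some player X from a configuration c_0. Define the positional strategy σ̄_X as follows: for c with σ_X(c) = c', if there is a non-read instruction transition c →(instr_ι) c', then σ̄_X(c) = c̃', where c̃' is obtained by first flushing all buffers of c (reaching c̄) and then executing instr_ι from c̄; otherwise (the move from c to c' is only possible via a read instruction) σ̄_X(c) = c'. Then σ̄_X is a winning strategy for player X from c_0. -/
import Mathlib

namespace TSOGames

/-- The data of a (safety) game: a partition of the configurations into those of
player A (`isA`) and those of player B, a transition relation, and final configurations. -/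
structure SGame (C : Type*) where
  isA : C → Prop
  step : C → C → Prop
  final : C → Prop

namespace SGame

variable {C : Type*} (G : SGame C)

/-- The transition relation alternates between the two players' configurations. -/
def Alternating : Prop := ∀ c c', G.step c c' → (G.isA c ↔ ¬ G.isA c')

/-- Every configuration has at least one successor. -/
def DeadlockFree : Prop := ∀ c, ∃ c', G.step c c'

/-- Final configurations belong to player A. -/
def FinalInA : Prop := ∀ c, G.final c → G.isA c

/-- An (infinite) play: consecutive configurations are related by `step`. -/
def IsPlay (ρ : ℕ → C) : Prop := ∀ i, G.step (ρ i) (ρ (i + 1))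

/-- A (history-dependent) strategy `σ`, given the strict history and the current
configuration, chooses a successor; it is valid for the player owning the
configurations satisfying `own` if it always chooses an actual successor. -/
def ValidStrat (own : C → Prop) (σ : List C → C → C) : Prop :=
  ∀ h c, own c → G.step c (σ h c)

/-- A play is consistent with the strategy `σ` of the player owning the
configurations satisfying `own` if at every such configuration the play follows `σ`. -/
def Consistent (own : C → Prop) (σ : List C → C → C) (ρ : ℕ → C) : Prop :=
  ∀ i, own (ρ i) → ρ (i + 1) = σ (List.ofFn fun j : Fin i => ρ j) (ρ i)

/-- A play is winning for player B if it visits a final configuration. -/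
def BWins (ρ : ℕ → C) : Prop := ∃ i, G.final (ρ i)

/-- A play is winning for player A if it never visits a final configuration. -/
def AWinsPlay (ρ : ℕ → C) : Prop := ¬ G.BWins ρ

/-- `σ` is a winning strategy from `c0` for the player owning the configurations
satisfying `own`, whose plays are winning when they satisfy `winPlay`:
it is valid and every play from `c0` consistent with it is winning. -/
def WinningStrat (own : C → Prop) (winPlay : (ℕ → C) → Prop)
    (σ : List C → C → C) (c0 : C) : Prop :=
  G.ValidStrat own σ ∧
    ∀ ρ : ℕ → C, ρ 0 = c0 → G.IsPlay ρ → Consistent own σ ρ → winPlay ρ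

/-- The given player has a winning strategy from `c0`. -/
def Wins (own : C → Prop) (winPlay : (ℕ → C) → Prop) (c0 : C) : Prop :=
  ∃ σ, G.WinningStrat own winPlay σ c0

/-- `c0` is winning for player A. -/
def WinA (c0 : C) : Prop := G.Wins (fun c => G.isA c) G.AWinsPlay c0

/-- `c0` is winning for player B. -/
def WinB (c0 : C) : Prop := G.Wins (fun c => ¬ G.isA c) G.BWins c0

end SGame

/-- Restriction of a game to a subset `D` of its configurations. -/
def restrictGame {C : Type*} (G : SGame C) (D : Set C) : SGame C where
  isA := G.isA
  step := fun c c' => G.step c c' ∧ c ∈ D ∧ c' ∈ D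
  final := fun c => G.final c ∧ c ∈ D

/-- The winning condition on plays for the player encoded by `b` (`true` = player A,
who wins a play iff it avoids the final configurations; `false` = player B). -/
def winPlayOf {C : Type*} (G : SGame C) (b : Bool) : (ℕ → C) → Prop :=
  fun ρ => if b then ¬ G.BWins ρ else G.BWins ρ

end TSOGames
namespace TSOGames

/-- TSO instructions: read, write, skip, and memory fence. -/
inductive Instr (X V : Type*) : Type _
  | read (x : X) (v : V)
  | write (x : X) (v : V)
  | skip
  | fence

/-- Whether an instruction is a read instruction. -/
def Instr.isRead {X V : Type*} : Instr X V → Bool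
  | .read _ _ => true
  | _ => false

/-- A concurrent program: a family of processes indexed by `I`, each a transition
system over local states `S` labeled by instructions over variables `X` and values `V`. -/
structure Program (I S X V : Type*) where
  delta : I → S → Instr X V → S → Prop

/-- A TSO configuration: local states, per-process FIFO store buffers
(newest message at the head, oldest at the end), and the shared memory. -/
structure Conf (I S X V : Type*) where
  st : I → S
  buf : I → List (X × V)
  mem : X → V

section TSO

variable {I S X V : Type*}

/-- The value of the most recent buffered write on `x`, if any
(the buffer stores the newest message first). -/
def bufVal [DecidableEq X] : List (X × V) → X → Option V
  | [], _ => none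
  | (y, v) :: rest, x => if y = x then some v else bufVal rest x

/-- The value process `ι` reads from variable `x`: the most recent buffered write of
`ι` on `x` if there is one, and the memory value otherwise. -/
def readVal [DecidableEq X] (c : Conf I S X V) (ι : I) (x : X) : V :=
  (bufVal (c.buf ι) x).getD (c.mem x)

variable [DecidableEq I] [DecidableEq X]

/-- Execution of one instruction by process `ι` under TSO semantics. -/
inductive InstrStep (P : Program I S X V) (ι : I) (instr : Instr X V) :
    Conf I S X V → Conf I S X V → Prop
  | read (c : Conf I S X V) (x : X) (v : V) (s' : S) :
      instr = Instr.read x v → P.delta ι (c.st ι) (Instr.read x v) s' →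
      readVal c ι x = v →
      InstrStep P ι instr c ⟨Function.update c.st ι s', c.buf, c.mem⟩
  | write (c : Conf I S X V) (x : X) (v : V) (s' : S) :
      instr = Instr.write x v → P.delta ι (c.st ι) (Instr.write x v) s' →
      InstrStep P ι instr c
        ⟨Function.update c.st ι s', Function.update c.buf ι ((x, v) :: c.buf ι), c.mem⟩
  | skip (c : Conf I S X V) (s' : S) :
      instr = Instr.skip → P.delta ι (c.st ι) Instr.skip s' →
      InstrStep P ι instr c ⟨Function.update c.st ι s', c.buf, c.mem⟩
  | fence (c : Conf I S X V) (s' : S) :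
      instr = Instr.fence → P.delta ι (c.st ι) Instr.fence s' → c.buf ι = [] →
      InstrStep P ι instr c ⟨Function.update c.st ι s', c.buf, c.mem⟩

/-- An update step: the oldest buffered message of some process is committed to memory. -/
inductive UpdStep : Conf I S X V → Conf I S X V → Prop
  | mk (c : Conf I S X V) (ι : I) (x : X) (v : V) (w : List (X × V)) :
      c.buf ι = w ++ [(x, v)] →
      UpdStep c ⟨c.st, Function.update c.buf ι w, Function.update c.mem x v⟩

/-- Finitely many update steps. -/
def Upds : Conf I S X V → Conf I S X V → Prop := Relation.ReflTransGen UpdStep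

/-- `flush` maps every configuration `c` to the configuration `c̄` obtained by
updating all buffered messages to the memory: `c →up* c̄` and all buffers of `c̄` are empty. -/
def IsFlush (flush : Conf I S X V → Conf I S X V) : Prop :=
  ∀ c, Upds c (flush c) ∧ ∀ ι, (flush c).buf ι = []

/-- Update steps by a player, if she is allowed to perform them (otherwise nothing happens). -/
def OptUpds (allowed : Bool) (c c' : Conf I S X V) : Prop :=
  if allowed then Upds c c' else c' = c

/-- A move of a player whose permissions to update before resp. after her move are
given by `perm`: optional updates before, one instruction, optional updates after. -/
def Move (P : Program I S X V) (perm : Bool × Bool) (c c' : Conf I S X V) : Prop :=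
  ∃ c1 c2, OptUpds perm.1 c c1 ∧ (∃ ι instr, InstrStep P ι instr c1 c2) ∧
    OptUpds perm.2 c2 c'

/-- The TSO game induced by a program `P`, update permissions
`permA`/`permB` = (may update before her move, may update after her move)
for players A and B, and a set `SF` of final local states. Game configurations are
TSO configurations annotated by `true` (player A's) or `false` (player B's). -/
def tsoGame (P : Program I S X V) (permA permB : Bool × Bool) (SF : Set S) :
    SGame (Conf I S X V × Bool) where
  isA := fun c => c.2 = true
  step := fun c c' =>
    (c.2 = true ∧ c'.2 = false ∧ Move P permA c.1 c'.1) ∨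
    (c.2 = false ∧ c'.2 = true ∧ Move P permB c.1 c'.1)
  final := fun c => c.2 = true ∧ ∃ ι, c.1.st ι ∈ SF

/-- The configurations owned by the player encoded by `b` (`true` = player A). -/
def ownOf (b : Bool) : Conf I S X V × Bool → Prop := fun c => c.2 = b

/-- The total number of buffered messages of a configuration. -/
def totalBuf [Fintype I] (c : Conf I S X V) : ℕ := ∑ ι, (c.buf ι).length

end TSO

end TSOGames
namespace TSOGames

variable {I S X V : Type*} [DecidableEq I] [DecidableEq X]

/-- `σbar` is the flushing modification of the positional strategy `σX` of the player
encoded by `xIsA`: at each of her configurations `c` with `σX c = c'`, if some non-read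
instruction transition leads from `c` to `c'`, then `σbar c` is obtained by first
flushing all buffers of `c` and then executing such an instruction (so that
`c' →up* σbar c`); otherwise (the move is only possible via a read) `σbar c = σX c`. -/
def IsFlushMod (P : Program I S X V) (flush : Conf I S X V → Conf I S X V)
    (xIsA : Bool) (σX σbar : Conf I S X V × Bool → Conf I S X V × Bool) : Prop :=
  ∀ c : Conf I S X V × Bool, c.2 = xIsA →
    ((∃ ι instr, Instr.isRead instr = false ∧ InstrStep P ι instr c.1 (σX c).1) →
      (∃ ι instr, Instr.isRead instr = false ∧ InstrStep P ι instr (flush c.1) (σbar c).1) ∧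
        Upds (σX c).1 (σbar c).1 ∧ (σbar c).2 = (σX c).2) ∧
    ((¬ ∃ ι instr, Instr.isRead instr = false ∧ InstrStep P ι instr c.1 (σX c).1) →
      σbar c = σX c)

end TSOGames
namespace TSOGames

section Aux

variable {I S X V : Type*} [DecidableEq I] [DecidableEq X]

lemma UpdStep.st_eq' {c c' : Conf I S X V} (h : UpdStep c c') : c'.st = c.st := by
  cases h; rfl

lemma Upds.st_eq' {c c' : Conf I S X V} (h : Upds c c') : c'.st = c.st := by
  induction h with
  | refl => rfl
  | tail _ h ih => rw [h.st_eq', ih]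

lemma tsoGame_step_snd' {P : Program I S X V} {pA pB : Bool × Bool} {SF : Set S}
    {c c' : Conf I S X V × Bool}
    (h : (tsoGame P pA pB SF).step c c') : c'.2 = !c.2 := by
  rcases h with ⟨h1, h2, -⟩ | ⟨h1, h2, -⟩ <;> simp [h1, h2]

lemma tsoGame_step_of_upds' {P : Program I S X V} {SF : Set S}
    {a b c : Conf I S X V × Bool}
    (hu : Upds a.1 b.1) (hb : a.2 = b.2)
    (h : (tsoGame P (true, false) (true, false) SF).step b c) :
    (tsoGame P (true, false) (true, false) SF).step a c := by
  rcases h with ⟨h1, h2, c1, c2, hu2, hi, he⟩ | ⟨h1, h2, c1, c2, hu2, hi, he⟩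
  · have hu2' : Upds b.1 c1 := hu2
    exact Or.inl ⟨hb.trans h1, h2, c1, c2, Relation.ReflTransGen.trans hu hu2', hi, he⟩
  · have hu2' : Upds b.1 c1 := hu2
    exact Or.inr ⟨hb.trans h1, h2, c1, c2, Relation.ReflTransGen.trans hu hu2', hi, he⟩

/-- The simulating play: follow `σX` at the configurations of the player encoded
by `b`, and copy the given play `ρ` elsewhere. -/
def simPlay' {C : Type*} (b : Bool) (σX : C × Bool → C × Bool)
    (c0 : C × Bool) (ρ : ℕ → C × Bool) : ℕ → C × Bool
  | 0 => c0
  | i + 1 =>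
    if (simPlay' b σX c0 ρ i).2 = b then σX (simPlay' b σX c0 ρ i) else ρ (i + 1)

end Aux

/-- Group II: both players may update exactly before their own moves. If `σX` is a
positional winning strategy for player X from `c0`, then its flushing modification
`σbar` is also a winning strategy for player X from `c0`. -/
theorem statement8 {I S X V : Type} [DecidableEq I] [DecidableEq X]
    (P : Program I S X V) (SF : Set S) (xIsA : Bool)
    (G : SGame (Conf I S X V × Bool))
    (hG : G = tsoGame P (true, false) (true, false) SF)
    (flush : Conf I S X V → Conf I S X V) (hflush : IsFlush flush)
    (c0 : Conf I S X V × Bool)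
    (σX σbar : Conf I S X V × Bool → Conf I S X V × Bool)
    (hwin : G.WinningStrat (ownOf xIsA) (winPlayOf G xIsA) (fun _ c => σX c) c0)
    (hbar : IsFlushMod P flush xIsA σX σbar) :
    G.WinningStrat (ownOf xIsA) (winPlayOf G xIsA) (fun _ c => σbar c) c0 := by
  subst hG
  obtain ⟨hval, hwin2⟩ := hwin
  constructor
  · -- validity of σbar
    intro h c hc
    have hc' : c.2 = xIsA := hc
    have hs := hval [] c hc
    by_cases hnr : ∃ ι instr, Instr.isRead instr = false ∧ InstrStep P ι instr c.1 (σX c).1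
    · obtain ⟨⟨ι, instr, hread, hstep⟩, hupds, hsnd⟩ := (hbar c hc').1 hnr
      have hmove : Move P (true, false) c.1 (σbar c).1 :=
        ⟨flush c.1, (σbar c).1, (hflush c.1).1, ⟨ι, instr, hstep⟩, rfl⟩
      rcases hs with ⟨h1, h2, -⟩ | ⟨h1, h2, -⟩
      · exact Or.inl ⟨h1, hsnd.trans h2, hmove⟩
      · exact Or.inr ⟨h1, hsnd.trans h2, hmove⟩
    · show (tsoGame P (true, false) (true, false) SF).step c (σbar c)
      rw [(hbar c hc').2 hnr]; exact hs
  · intro ρ hρ0 hplay hcons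
    set π : ℕ → Conf I S X V × Bool := simPlay' xIsA σX c0 ρ with hπ
    have hπ0 : π 0 = c0 := rfl
    have hπs : ∀ i, π (i + 1) = if (π i).2 = xIsA then σX (π i) else ρ (i + 1) :=
      fun i => rfl
    have hinv : ∀ i, (π i).2 = (ρ i).2 ∧ ((ρ i).2 = xIsA → π i = ρ i) ∧
        Upds (π i).1 (ρ i).1 := by
      intro i
      induction i with
      | zero =>
        rw [hπ0, hρ0]
        exact ⟨rfl, fun _ => rfl, Relation.ReflTransGen.refl⟩
      | succ i ih =>
        obtain ⟨hb, heq, hu⟩ := ih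
        by_cases hx : (ρ i).2 = xIsA
        · have he := heq hx
          have hπi2 : (π i).2 = xIsA := by rw [hb]; exact hx
          have hstep1 : π (i + 1) = σX (ρ i) := by rw [hπs, if_pos hπi2, he]
          have hρ1 : ρ (i + 1) = σbar (ρ i) := hcons i hx
          by_cases hnr : ∃ ι instr, Instr.isRead instr = false ∧
              InstrStep P ι instr (ρ i).1 (σX (ρ i)).1
          · obtain ⟨-, hupds, hsnd⟩ := (hbar (ρ i) hx).1 hnr
            have hsX := hval [] (ρ i) hx
            have hflip : (σX (ρ i)).2 = !(ρ i).2 := tsoGame_step_snd' hsX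
            refine ⟨?_, ?_, ?_⟩
            · rw [hstep1, hρ1, hsnd]
            · intro hc
              exfalso
              rw [hρ1, hsnd, hflip, hx] at hc
              simp at hc
            · rw [hstep1, hρ1]; exact hupds
          · have hbar_eq : σbar (ρ i) = σX (ρ i) := (hbar (ρ i) hx).2 hnr
            rw [hstep1, hρ1, hbar_eq]
            exact ⟨rfl, fun _ => rfl, Relation.ReflTransGen.refl⟩
        · have hπi2 : ¬ (π i).2 = xIsA := by rw [hb]; exact hx
          have hstep1 : π (i + 1) = ρ (i + 1) := by rw [hπs, if_neg hπi2]
          rw [hstep1]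
          exact ⟨rfl, fun _ => rfl, Relation.ReflTransGen.refl⟩
    have hπplay : (tsoGame P (true, false) (true, false) SF).IsPlay π := by
      intro i
      obtain ⟨hb, heq, hu⟩ := hinv i
      by_cases hx : (π i).2 = xIsA
      · rw [hπs, if_pos hx]; exact hval [] (π i) hx
      · rw [hπs, if_neg hx]
        exact tsoGame_step_of_upds' hu hb (hplay i)
    have hπcons : SGame.Consistent (ownOf xIsA) (fun _ c => σX c) π := by
      intro i hx
      have hx' : (π i).2 = xIsA := hx
      show π (i + 1) = σX (π i)
      rw [hπs, if_pos hx']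
    have hw := hwin2 π hπ0 hπplay hπcons
    have hfin : ∀ i, (tsoGame P (true, false) (true, false) SF).final (π i) ↔
        (tsoGame P (true, false) (true, false) SF).final (ρ i) := by
      intro i
      obtain ⟨hb, -, hu⟩ := hinv i
      have hst : (ρ i).1.st = (π i).1.st := hu.st_eq'
      constructor
      · rintro ⟨h1, ι, h2⟩
        exact ⟨hb.symm.trans h1, ι, by rw [hst]; exact h2⟩
      · rintro ⟨h1, ι, h2⟩
        exact ⟨hb.trans h1, ι, by rw [← hst]; exact h2⟩
    have hBW : (tsoGame P (true, false) (true, false) SF).BWins π ↔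
        (tsoGame P (true, false) (true, false) SF).BWins ρ := by
      constructor
      · rintro ⟨i, hi⟩; exact ⟨i, (hfin i).1 hi⟩
      · rintro ⟨i, hi⟩; exact ⟨i, (hfin i).2 hi⟩
    cases xIsA with
    | true => simp only [winPlayOf, if_true] at hw ⊢; exact fun hc => hw (hBW.2 hc)
    | false => simp only [winPlayOf] at hw ⊢; exact hBW.1 hw

end TSOGames
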